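/- arXiv:2603.10054 — 3 statements merged into one kernel-verified Lean document; each statement's English description precedes it below -/
import Mathlib

section
/- Let n ≥ 2 be an integer and let a, b be real numbers. On the open cube (0,1)^n define the weight w(ρ) = ∏_{i=1}^n (ρ_i(1−ρ_i))^{(2^{n−1}−1)/2} and the function R(ρ) = a − b ∑_{i=1}^n 1/(ρ_i(1−ρ_i)). Then both ∫_{(0,1)^n} R·w and ∫_{(0,1)^n} w are finite, ∫ w > 0, and the weighted average satisfies ∫_{(0,1)^n} R·w / ∫_{(0,1)^n} w = a − b·n·2^{n+1}/(2^{n−1} − 1). -/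
open MeasureTheory

namespace CollapsingStarAux

/-- The one-dimensional Beta-type integral: integrability and value. -/
lemma beta_int {β : ℝ} (hβ : -1 < β) :
    IntegrableOn (fun x => (x * (1 - x)) ^ β) (Set.Ioo (0:ℝ) 1) volume ∧
    ∫ x in Set.Ioo (0:ℝ) 1, (x * (1 - x)) ^ β =
      Real.Gamma (β + 1) ^ 2 / Real.Gamma (2 * β + 2) := by
  have hu : (0:ℝ) < β + 1 := by linarith
  set u : ℂ := ((β + 1 : ℝ) : ℂ) with hu_def
  have hure : 0 < u.re := by simpa [hu_def] using hu
  have hbc : Complex.betaIntegral u u =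
      ∫ x in (0:ℝ)..1, (x:ℂ) ^ (u - 1) * ((1:ℂ) - x) ^ (u - 1) := rfl
  have hconv := Complex.betaIntegral_convergent hure hure
  have hIoc : IntegrableOn (fun x : ℝ => (x:ℂ) ^ (u - 1) * ((1:ℂ) - x) ^ (u - 1))
      (Set.Ioc (0:ℝ) 1) volume := by
    rw [← intervalIntegrable_iff_integrableOn_Ioc_of_le zero_le_one]
    exact hconv
  have hu1 : u - 1 = (β : ℂ) := by rw [hu_def]; push_cast; ring
  have hEq : Set.EqOn (fun x : ℝ => (((x * (1 - x)) ^ β : ℝ) : ℂ))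
      (fun x : ℝ => (x:ℂ) ^ (u - 1) * ((1:ℂ) - x) ^ (u - 1)) (Set.Ioo (0:ℝ) 1) := by
    intro x hx
    have hx0 : (0:ℝ) ≤ x := hx.1.le
    have hx1 : (0:ℝ) ≤ 1 - x := by linarith [hx.2]
    simp only [hu1]
    rw [Real.mul_rpow hx0 hx1]
    push_cast [Complex.ofReal_cpow hx0, Complex.ofReal_cpow hx1]
    norm_num
  have hIooC : IntegrableOn (fun x : ℝ => (((x * (1 - x)) ^ β : ℝ) : ℂ))
      (Set.Ioo (0:ℝ) 1) volume :=
    ((hIoc.mono_set Set.Ioo_subset_Ioc_self).congr_fun hEq.symm measurableSet_Ioo)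
  have hint : IntegrableOn (fun x => (x * (1 - x)) ^ β) (Set.Ioo (0:ℝ) 1) volume := by
    have := hIooC.re
    simpa [IntegrableOn] using this
  refine ⟨hint, ?_⟩
  -- evaluate via the complex Beta integral
  have hG2 : Complex.Gamma (u + u) = ((Real.Gamma (2 * β + 2) : ℝ) : ℂ) := by
    rw [show u + u = ((2 * β + 2 : ℝ) : ℂ) by push_cast [hu_def]; ring]
    exact Complex.Gamma_ofReal _
  have hG2pos : 0 < Real.Gamma (2 * β + 2) := Real.Gamma_pos_of_pos (by linarith)
  have hgg := Complex.Gamma_mul_Gamma_eq_betaIntegral hure hure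
  have hbval : Complex.betaIntegral u u =
      ((Real.Gamma (β + 1) ^ 2 / Real.Gamma (2 * β + 2) : ℝ) : ℂ) := by
    have hG1 : Complex.Gamma u = ((Real.Gamma (β + 1) : ℝ) : ℂ) := Complex.Gamma_ofReal _
    rw [hG1, hG2] at hgg
    have hne : ((Real.Gamma (2 * β + 2) : ℝ) : ℂ) ≠ 0 := by
      exact_mod_cast hG2pos.ne'
    have h := (eq_div_iff hne).mpr (show Complex.betaIntegral u u *
        ((Real.Gamma (2 * β + 2) : ℝ) : ℂ) =
        ((Real.Gamma (β + 1) : ℝ) : ℂ) * ((Real.Gamma (β + 1) : ℝ) : ℂ) by rw [hgg]; ring)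
    rw [h]; push_cast; ring
  have hcast : ((∫ x in Set.Ioo (0:ℝ) 1, (x * (1 - x)) ^ β : ℝ) : ℂ) =
      ((Real.Gamma (β + 1) ^ 2 / Real.Gamma (2 * β + 2) : ℝ) : ℂ) := by
    have hofr : ∫ x in Set.Ioo (0:ℝ) 1, (((x * (1 - x)) ^ β : ℝ) : ℂ) =
        ((∫ x in Set.Ioo (0:ℝ) 1, (x * (1 - x)) ^ β : ℝ) : ℂ) := integral_ofReal
    rw [← hofr]
    calc ∫ x in Set.Ioo (0:ℝ) 1, (((x * (1 - x)) ^ β : ℝ) : ℂ)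
        = ∫ x in Set.Ioo (0:ℝ) 1, (x:ℂ) ^ (u - 1) * ((1:ℂ) - x) ^ (u - 1) :=
          setIntegral_congr_fun measurableSet_Ioo hEq
      _ = ∫ x in Set.Ioc (0:ℝ) 1, (x:ℂ) ^ (u - 1) * ((1:ℂ) - x) ^ (u - 1) :=
          (integral_Ioc_eq_integral_Ioo).symm
      _ = ∫ x in (0:ℝ)..1, (x:ℂ) ^ (u - 1) * ((1:ℂ) - x) ^ (u - 1) :=
          (intervalIntegral.integral_of_le zero_le_one).symm
      _ = ((Real.Gamma (β + 1) ^ 2 / Real.Gamma (2 * β + 2) : ℝ) : ℂ) := by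
          rw [← hbc, hbval]
  exact_mod_cast hcast

end CollapsingStarAux

/-- Volume-averaged Ricci scalar of the collapsing star bitnet `C̃ (n+1)`:
with weight `w ρ = ∏ i (ρ i (1 - ρ i))^((2^(n-1)-1)/2)` and
`R ρ = a - b ∑ i 1/(ρ i (1 - ρ i))` on `(0,1)^n`, both `R·w` and `w` are
integrable, `∫ w > 0`, and `⟨R⟩ = a - b·n·2^(n+1)/(2^(n-1)-1)`. -/
theorem collapsing_star_average_ricci (n : ℕ) (hn : 2 ≤ n) (a b : ℝ) :
    let α : ℝ := ((2 : ℝ) ^ (n - 1) - 1) / 2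
    let w : (Fin n → ℝ) → ℝ := fun ρ => ∏ i, (ρ i * (1 - ρ i)) ^ α
    let R : (Fin n → ℝ) → ℝ := fun ρ => a - b * ∑ i, 1 / (ρ i * (1 - ρ i))
    let S : Set (Fin n → ℝ) := Set.univ.pi fun _ => Set.Ioo (0 : ℝ) 1
    IntegrableOn (fun ρ => R ρ * w ρ) S volume ∧
    IntegrableOn w S volume ∧
    0 < ∫ ρ in S, w ρ ∧
    (∫ ρ in S, R ρ * w ρ) / (∫ ρ in S, w ρ) =
      a - b * n * (2 : ℝ) ^ (n + 1) / ((2 : ℝ) ^ (n - 1) - 1) := by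
  intro α w R S
  classical
  set c : ℝ := (2 : ℝ) ^ (n - 1) with hc_def
  have hc2 : (2:ℝ) ≤ c := by
    rw [hc_def]
    calc (2:ℝ) = 2 ^ 1 := (pow_one 2).symm
    _ ≤ 2 ^ (n - 1) := pow_le_pow_right₀ one_le_two (by omega)
  have hα_pos : 0 < α := by
    show 0 < (c - 1) / 2
    linarith
  have hα_gt : -1 < α := by linarith
  have hα1_gt : -1 < α - 1 := by linarith
  -- 1-D values
  set Iα : ℝ := ∫ x in Set.Ioo (0:ℝ) 1, (x * (1 - x)) ^ α with hIα_def
  set Iα' : ℝ := ∫ x in Set.Ioo (0:ℝ) 1, (x * (1 - x)) ^ (α - 1) with hIα'_def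
  obtain ⟨hint_α, hval_α⟩ := CollapsingStarAux.beta_int hα_gt
  obtain ⟨hint_α', hval_α'⟩ := CollapsingStarAux.beta_int hα1_gt
  have hIα_pos : 0 < Iα := by
    rw [hIα_def, hval_α]
    exact div_pos (pow_pos (Real.Gamma_pos_of_pos (by linarith)) 2)
      (Real.Gamma_pos_of_pos (by linarith))
  have hIα'_pos : 0 < Iα' := by
    rw [hIα'_def, hval_α']
    exact div_pos (pow_pos (Real.Gamma_pos_of_pos (by linarith)) 2)
      (Real.Gamma_pos_of_pos (by linarith))
  -- the ratio
  have hkey : Iα' = Iα * (4 * c / (c - 1)) := by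
    have hΓα : 0 < Real.Gamma α := Real.Gamma_pos_of_pos hα_pos
    have hΓ2α : 0 < Real.Gamma (2 * α) := Real.Gamma_pos_of_pos (by linarith)
    have e1 : Real.Gamma (α + 1) = α * Real.Gamma α := Real.Gamma_add_one hα_pos.ne'
    have e2 : Real.Gamma (2 * α + 2) = (2 * α + 1) * (2 * α) * Real.Gamma (2 * α) := by
      have h1 : Real.Gamma (2 * α + 1) = (2 * α) * Real.Gamma (2 * α) :=
        Real.Gamma_add_one (by positivity)
      have h2 : Real.Gamma ((2 * α + 1) + 1) = (2 * α + 1) * Real.Gamma (2 * α + 1) :=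
        Real.Gamma_add_one (by positivity)
      calc Real.Gamma (2 * α + 2) = Real.Gamma ((2 * α + 1) + 1) := by ring_nf
        _ = (2 * α + 1) * ((2 * α) * Real.Gamma (2 * α)) := by rw [h2, h1]
        _ = (2 * α + 1) * (2 * α) * Real.Gamma (2 * α) := by ring
    have hval_α'' : Iα' = Real.Gamma α ^ 2 / Real.Gamma (2 * α) := by
      rw [hIα'_def, hval_α', show α - 1 + 1 = α by ring, show 2 * (α - 1) + 2 = 2 * α by ring]
    have hαc : α = (c - 1) / 2 := rfl
    have h2α1 : 2 * α + 1 = c := by rw [hαc]; ring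
    rw [hval_α'', hIα_def, hval_α, e1, e2, h2α1]
    have hcne : c - 1 ≠ 0 := by linarith
    field_simp
    rw [hαc]; ring
  -- indicator gadgets
  set g : ℝ → ℝ → ℝ := fun β => (Set.Ioo (0:ℝ) 1).indicator (fun x => (x * (1 - x)) ^ β)
    with hg_def
  have hg_int : ∀ β : ℝ, -1 < β → Integrable (g β) := by
    intro β hβ
    rw [hg_def]
    exact (integrable_indicator_iff measurableSet_Ioo).mpr (CollapsingStarAux.beta_int hβ).1
  have hg_val : ∀ β : ℝ, ∫ x, g β x = ∫ x in Set.Ioo (0:ℝ) 1, (x * (1 - x)) ^ β := by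
    intro β; rw [hg_def]; exact integral_indicator measurableSet_Ioo
  have hSm : MeasurableSet S := MeasurableSet.univ_pi fun _ => measurableSet_Ioo
  -- indicator of a product over the cube
  have hprod_ind : ∀ (f : Fin n → ℝ → ℝ) (ρ : Fin n → ℝ),
      S.indicator (fun ρ => ∏ i, f i (ρ i)) ρ =
        ∏ i, (Set.Ioo (0:ℝ) 1).indicator (f i) (ρ i) := by
    intro f ρ
    by_cases hρ : ρ ∈ S
    · rw [Set.indicator_of_mem hρ]
      exact Finset.prod_congr rfl fun i _ =>
        (Set.indicator_of_mem (hρ i (Set.mem_univ i)) _).symm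
    · rw [Set.indicator_of_notMem hρ]
      obtain ⟨i, hi⟩ : ∃ i, ρ i ∉ Set.Ioo (0:ℝ) 1 := by
        by_contra h
        push_neg at h
        exact hρ fun i _ => h i
      exact (Finset.prod_eq_zero (Finset.mem_univ i) (Set.indicator_of_notMem hi _)).symm
  -- indicator identity for w
  have hw_ind : S.indicator w = fun ρ => ∏ i, g α (ρ i) := by
    funext ρ
    exact hprod_ind (fun _ x => (x * (1 - x)) ^ α) ρ
  -- indicator identity for R * w
  have hrw_ind : S.indicator (fun ρ => R ρ * w ρ) =
      fun ρ => a * ∏ i, g α (ρ i) -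
        b * ∑ i, ∏ j, g (if j = i then α - 1 else α) (ρ j) := by
    funext ρ
    by_cases hρ : ρ ∈ S
    · rw [Set.indicator_of_mem hρ]
      have hui : ∀ i, 0 < ρ i * (1 - ρ i) := by
        intro i
        have h := hρ i (Set.mem_univ i)
        have h1 : 0 < ρ i := h.1
        have h2 : ρ i < 1 := h.2
        nlinarith
      have hterm : ∀ i : Fin n, ∏ j, g (if j = i then α - 1 else α) (ρ j) =
          (1 / (ρ i * (1 - ρ i))) * ∏ j, (ρ j * (1 - ρ j)) ^ α := by
        intro i
        have hfac : ∀ j : Fin n, g (if j = i then α - 1 else α) (ρ j) =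
            (ρ j * (1 - ρ j)) ^ α * (if j = i then (ρ j * (1 - ρ j))⁻¹ else 1) := by
          intro j
          have hmem := hρ j (Set.mem_univ j)
          by_cases hji : j = i
          · simp only [hji, if_true, hg_def]
            rw [Set.indicator_of_mem (hρ i (Set.mem_univ i))]
            rw [Real.rpow_sub (hui i), Real.rpow_one, div_eq_mul_inv]
          · simp only [hji, if_false, hg_def, mul_one]
            rw [Set.indicator_of_mem hmem]
        rw [Finset.prod_congr rfl fun j _ => hfac j, Finset.prod_mul_distrib,
          Finset.prod_ite_eq' Finset.univ i (fun j => (ρ j * (1 - ρ j))⁻¹)]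
        simp [Finset.mem_univ, one_div, mul_comm]
      rw [Finset.sum_congr rfl fun i _ => hterm i]
      have hwρ : ∀ i, g α (ρ i) = (ρ i * (1 - ρ i)) ^ α := fun i =>
        Set.indicator_of_mem (hρ i (Set.mem_univ i)) _
      rw [Finset.prod_congr rfl fun i _ => hwρ i]
      show (a - b * ∑ i, 1 / (ρ i * (1 - ρ i))) * (∏ i, (ρ i * (1 - ρ i)) ^ α) = _
      rw [sub_mul, mul_assoc, Finset.sum_mul]
    · rw [Set.indicator_of_notMem hρ]
      obtain ⟨i, hi⟩ : ∃ i, ρ i ∉ Set.Ioo (0:ℝ) 1 := by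
        by_contra h
        push_neg at h
        exact hρ fun i _ => h i
      have hz : ∀ β : ℝ, g β (ρ i) = 0 := fun β => Set.indicator_of_notMem hi _
      have h1 : ∏ j, g α (ρ j) = 0 := Finset.prod_eq_zero (Finset.mem_univ i) (hz α)
      have h2 : ∀ k : Fin n, ∏ j, g (if j = k then α - 1 else α) (ρ j) = 0 := fun k =>
        Finset.prod_eq_zero (Finset.mem_univ i) (hz _)
      simp [h1, Finset.sum_congr rfl fun k _ => h2 k]
  -- integrability
  have hW : Integrable (fun ρ : Fin n → ℝ => ∏ i, g α (ρ i)) :=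
    Integrable.fintype_prod (𝕜 := ℝ) fun _ => hg_int α hα_gt
  have hTi : ∀ i : Fin n,
      Integrable (fun ρ : Fin n → ℝ => ∏ j, g (if j = i then α - 1 else α) (ρ j)) := by
    intro i
    refine Integrable.fintype_prod (𝕜 := ℝ) fun j => ?_
    by_cases hji : j = i
    · simpa [hji] using hg_int (α - 1) hα1_gt
    · simpa [hji] using hg_int α hα_gt
  have hRW : Integrable (fun ρ : Fin n → ℝ => a * ∏ i, g α (ρ i) -
      b * ∑ i, ∏ j, g (if j = i then α - 1 else α) (ρ j)) :=
    (hW.const_mul a).sub ((integrable_finset_sum _ fun i _ => hTi i).const_mul b)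
  have hIw : IntegrableOn w S volume := by
    rw [← integrable_indicator_iff hSm, hw_ind]
    exact hW
  have hIrw : IntegrableOn (fun ρ => R ρ * w ρ) S volume := by
    rw [← integrable_indicator_iff hSm, hrw_ind]
    exact hRW
  -- value of ∫ w
  have hw_int_val : ∫ ρ in S, w ρ = Iα ^ n := by
    rw [← integral_indicator hSm, hw_ind,
      integral_fintype_prod_volume_eq_pow (ι := Fin n) (g α), hg_val, Fintype.card_fin, hIα_def]
  have hIαn_pos : 0 < Iα ^ n := pow_pos hIα_pos n
  -- value of ∫ R w
  have hterm_val : ∀ i : Fin n,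
      (∫ ρ : Fin n → ℝ, ∏ j, g (if j = i then α - 1 else α) (ρ j)) = Iα' * Iα ^ (n - 1) := by
    intro i
    rw [integral_fintype_prod_volume_eq_prod (ι := Fin n) (fun j => g (if j = i then α - 1 else α))]
    have hval : ∀ j : Fin n, (∫ x, g (if j = i then α - 1 else α) x) =
        if j = i then Iα' else Iα := by
      intro j
      by_cases hji : j = i
      · simp only [hji, if_true]; rw [hg_val]
      · simp only [hji, if_false]; rw [hg_val]
    rw [Finset.prod_congr rfl fun j _ => hval j,
      Finset.prod_eq_mul_prod_sdiff_singleton_of_mem (Finset.mem_univ i)]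
    simp only [if_true]
    congr 1
    rw [Finset.prod_congr rfl (fun j hj => by
      rw [if_neg (by simpa [Finset.mem_sdiff] using hj : j ≠ i)]),
      Finset.prod_const]
    congr 1
    rw [Finset.card_sdiff_of_subset (Finset.subset_univ {i}), Finset.card_univ, Fintype.card_fin,
      Finset.card_singleton]
  have hrw_int_val : ∫ ρ in S, R ρ * w ρ = a * Iα ^ n - b * n * (Iα' * Iα ^ (n - 1)) := by
    rw [← integral_indicator hSm, hrw_ind, integral_sub (hW.const_mul a)
      ((integrable_finset_sum _ fun i _ => hTi i).const_mul b),
      integral_const_mul, integral_const_mul,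
      integral_finset_sum _ fun i _ => hTi i,
      integral_fintype_prod_volume_eq_pow (ι := Fin n) (g α), hg_val, Fintype.card_fin,
      Finset.sum_congr rfl fun i _ => hterm_val i, Finset.sum_const, Finset.card_univ,
      Fintype.card_fin, ← hIα_def]
    simp [mul_assoc, mul_comm, mul_left_comm]
  refine ⟨hIrw, hIw, by rw [hw_int_val]; exact hIαn_pos, ?_⟩
  rw [hrw_int_val, hw_int_val]
  have hpow : Iα ^ n = Iα * Iα ^ (n - 1) := by
    conv_lhs => rw [show n = (n - 1) + 1 by omega]
    rw [pow_succ]; ring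
  have hnum : a * Iα ^ n - b * n * (Iα' * Iα ^ (n - 1)) =
      (a - b * n * (4 * c / (c - 1))) * Iα ^ n := by
    rw [hkey, hpow]; ring
  rw [hnum, mul_div_cancel_right₀ _ hIαn_pos.ne']
  have h4c : (2:ℝ) ^ (n + 1) = 4 * c := by
    rw [hc_def, show n + 1 = (n - 1) + 2 by omega, pow_add]; ring
  rw [h4c]
  ring
end

section
/- Define R(r₁,r₂) = 3(12r₁²r₂² − 12r₁²r₂ + r₁² − 12r₁r₂² + 12r₁r₂ − r₁ + r₂² − r₂) / (r₁ r₂ (1−r₁)(1−r₂)) and the weight w(r₁,r₂) = (r₁(1−r₁) r₂(1−r₂))^{5/2} on (0,1)². Then ∫₀¹∫₀¹ R·w dr₁ dr₂ / ∫₀¹∫₀¹ w dr₁ dr₂ = 36/5. Moreover, there is no integer k such that 36/5 = k/2; hence the volume-averaged Ricci scalar of the double-collider bitnet is not a half-integer. -/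
open MeasureTheory

open Set in
noncomputable def Jb (p q : ℝ) : ℝ := ∫ x in Set.Ioo (0:ℝ) 1, x ^ p * (1 - x) ^ q

lemma Jb_eq_interval (p q : ℝ) : Jb p q = ∫ x in (0:ℝ)..1, x ^ p * (1 - x) ^ q := by
  rw [intervalIntegral.integral_of_le zero_le_one, integral_Ioc_eq_integral_Ioo, Jb]

lemma cont_term {p q : ℝ} (hp : 0 < p) (hq : 0 < q) :
    Continuous fun x : ℝ => x ^ p * (1 - x) ^ q := by
  apply Continuous.mul
  · exact continuous_id.rpow_const fun x => Or.inr hp.le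
  · exact (continuous_const.sub continuous_id).rpow_const fun x => Or.inr hq.le

lemma Jb_ibp {p q : ℝ} (hp : 1 < p) (hq : 1 < q) :
    p * Jb (p - 1) q = q * Jb p (q - 1) := by
  have h1 : ∀ x : ℝ, HasDerivAt (fun x : ℝ => x ^ p * (1 - x) ^ q)
      (p * x ^ (p - 1) * (1 - x) ^ q - x ^ p * (q * (1 - x) ^ (q - 1))) x := by
    intro x
    have hx1 : HasDerivAt (fun x : ℝ => x ^ p) (p * x ^ (p - 1)) x :=
      Real.hasDerivAt_rpow_const (Or.inr hp.le)
    have hx2 : HasDerivAt (fun x : ℝ => (1 - x) ^ q) ((q * (1 - x) ^ (q - 1)) * (-1)) x := by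
      have := (Real.hasDerivAt_rpow_const (p := q) (x := 1 - x) (Or.inr hq.le)).comp x
        ((hasDerivAt_const x 1).sub (hasDerivAt_id x))
      simpa [Function.comp_def] using this
    have := hx1.fun_mul hx2
    exact this.congr_deriv (by ring)
  have hint1 : IntervalIntegrable (fun x : ℝ => p * x ^ (p-1) * (1-x) ^ q) volume 0 1 := by
    apply Continuous.intervalIntegrable
    exact (continuous_const.mul (continuous_id.rpow_const fun x => Or.inr (by linarith))).mul
      ((continuous_const.sub continuous_id).rpow_const fun x => Or.inr (by linarith))
  have hint2 : IntervalIntegrable (fun x : ℝ => x ^ p * (q * (1-x) ^ (q-1))) volume 0 1 := by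
    apply Continuous.intervalIntegrable
    exact (continuous_id.rpow_const fun x => Or.inr (by linarith)).mul
      (continuous_const.mul ((continuous_const.sub continuous_id).rpow_const
        fun x => Or.inr (by linarith)))
  have hfund := intervalIntegral.integral_eq_sub_of_hasDerivAt
    (fun x _ => h1 x) ((hint1.sub hint2))
  rw [intervalIntegral.integral_sub hint1 hint2] at hfund
  simp only [Real.one_rpow, Real.zero_rpow (by linarith : p ≠ 0), sub_self,
    Real.zero_rpow (by linarith : q ≠ 0), one_mul, zero_mul, mul_zero, mul_one, sub_zero] at hfund
  have h1' : (∫ x in (0:ℝ)..1, p * x ^ (p-1) * (1-x) ^ q) =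
      p * ∫ x in (0:ℝ)..1, x ^ (p-1) * (1-x)^q := by
    rw [← intervalIntegral.integral_const_mul]
    congr 1; ext x; ring
  rw [h1'] at hfund
  have h2 : (∫ x in (0:ℝ)..1, x ^ p * (q * (1-x)^(q-1))) =
      q * ∫ x in (0:ℝ)..1, x ^ p * (1-x)^(q-1) := by
    rw [← intervalIntegral.integral_const_mul]
    congr 1; ext x; ring
  rw [h2] at hfund
  rw [Jb_eq_interval, Jb_eq_interval]
  linarith

lemma Jb_int {p q : ℝ} (hp : 0 < p) (hq : 0 < q) :
    IntegrableOn (fun x : ℝ => x ^ p * (1 - x) ^ q) (Set.Ioo 0 1) := by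
  exact ((cont_term hp hq).integrableOn_Icc (a := 0) (b := 1)).mono_set Set.Ioo_subset_Icc_self

lemma Jb_split {p q : ℝ} (hp : 0 < p) (hq : 0 < q) : Jb p (q + 1) = Jb p q - Jb (p + 1) q := by
  have key : Jb p (q+1) + Jb (p+1) q = Jb p q := by
    rw [Jb, Jb, Jb]
    rw [← integral_add]
    · apply setIntegral_congr_fun measurableSet_Ioo
      intro x hx
      obtain ⟨hx0, hx1⟩ := hx
      have h1 : (1 : ℝ) - x ≠ 0 := by linarith
      have h0 : x ≠ 0 := ne_of_gt hx0
      simp only []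
      rw [Real.rpow_add_one h1, Real.rpow_add_one h0]
      ring
    · exact Jb_int hp (by linarith)
    · exact Jb_int (by linarith) hq
  linarith

lemma Jb_D_eq : Jb (5/2) (5/2) = (5/24) * Jb (3/2) (3/2) := by
  have e1 := Jb_ibp (p := 5/2) (q := 5/2) (by norm_num) (by norm_num)
  have e2 := Jb_split (p := 3/2) (q := 3/2) (by norm_num) (by norm_num)
  have e3 := Jb_ibp (p := 7/2) (q := 5/2) (by norm_num) (by norm_num)
  have e4 := Jb_split (p := 5/2) (q := 3/2) (by norm_num) (by norm_num)
  norm_num at e1 e2 e3 e4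
  linarith

lemma Jb_D_pos : 0 < Jb (5/2) (5/2) := by
  rw [Jb_eq_interval]
  apply intervalIntegral.intervalIntegral_pos_of_pos_on
  · exact (cont_term (by norm_num) (by norm_num)).intervalIntegrable 0 1
  · intro x hx
    have h1 : (0:ℝ) < 1 - x := by linarith [hx.2]
    exact mul_pos (Real.rpow_pos_of_pos hx.1 _) (Real.rpow_pos_of_pos h1 _)
  · norm_num

/-- The volume-averaged Ricci scalar of the double-collider bitnet `D₄` equals `36/5`,
which is not a half-integer; this disproves the half-integer quantization conjecture
for loop bitnets. -/
theorem double_collider_average_ricci :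
    let R : ℝ → ℝ → ℝ := fun r₁ r₂ =>
      3 * (12 * r₁ ^ 2 * r₂ ^ 2 - 12 * r₁ ^ 2 * r₂ + r₁ ^ 2 - 12 * r₁ * r₂ ^ 2 +
        12 * r₁ * r₂ - r₁ + r₂ ^ 2 - r₂) / (r₁ * r₂ * (1 - r₁) * (1 - r₂))
    let w : ℝ → ℝ → ℝ := fun r₁ r₂ => (r₁ * (1 - r₁) * (r₂ * (1 - r₂))) ^ ((5 : ℝ) / 2)
    (∫ r in Set.Ioo (0 : ℝ) 1 ×ˢ Set.Ioo (0 : ℝ) 1, R r.1 r.2 * w r.1 r.2) /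
      (∫ r in Set.Ioo (0 : ℝ) 1 ×ˢ Set.Ioo (0 : ℝ) 1, w r.1 r.2) = 36 / 5 ∧
    ¬ ∃ k : ℤ, (36 : ℝ) / 5 = (k : ℝ) / 2 := by
  intro R w
  set g : ℝ → ℝ := fun x => x ^ ((3:ℝ)/2) * (1 - x) ^ ((3:ℝ)/2) with hg
  set f5 : ℝ → ℝ := fun x => x ^ ((5:ℝ)/2) * (1 - x) ^ ((5:ℝ)/2) with hf5
  set u : ℝ → ℝ := fun x => -(f5 x) with hu
  set vv : ℝ → ℝ := fun x => g x - 12 * f5 x with hvv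
  have hA : (∫ x in Set.Ioo (0:ℝ) 1, g x) = Jb (3/2) (3/2) := rfl
  have hD : (∫ x in Set.Ioo (0:ℝ) 1, f5 x) = Jb (5/2) (5/2) := rfl
  set A := Jb (3/2) (3/2)
  set D := Jb (5/2) (5/2)
  have hDA : D = (5/24) * A := Jb_D_eq
  have hDpos : 0 < D := Jb_D_pos
  have hg_int : IntegrableOn g (Set.Ioo (0:ℝ) 1) := Jb_int (by norm_num) (by norm_num)
  have hf5_int : IntegrableOn f5 (Set.Ioo (0:ℝ) 1) := Jb_int (by norm_num) (by norm_num)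
  have hu_int : IntegrableOn u (Set.Ioo (0:ℝ) 1) := hf5_int.neg
  have hvv_int : IntegrableOn vv (Set.Ioo (0:ℝ) 1) := hg_int.sub (hf5_int.const_mul 12)
  have hIu : (∫ x in Set.Ioo (0:ℝ) 1, u x) = -D := by
    rw [hu]; rw [integral_neg]; rw [hD]
  have hIvv : (∫ x in Set.Ioo (0:ℝ) 1, vv x) = A - 12 * D := by
    rw [hvv]
    rw [integral_sub hg_int (hf5_int.const_mul 12), integral_const_mul]
    rw [hA, hD]
  -- key pointwise rewrites
  have hrpow : ∀ x : ℝ, 0 < x → x < 1 → (x * (1-x)) ^ ((5:ℝ)/2) = f5 x ∧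
      f5 x = g x * (x * (1-x)) := by
    intro x hx0 hx1
    have h1 : (0:ℝ) < 1 - x := by linarith
    constructor
    · rw [hf5]; exact Real.mul_rpow hx0.le h1.le
    · rw [hf5, hg]
      simp only []
      have e1 : ((5:ℝ)/2) = (3:ℝ)/2 + 1 := by norm_num
      rw [e1, Real.rpow_add_one hx0.ne', Real.rpow_add_one h1.ne']
      ring
  -- denominator
  have hden : (∫ r in Set.Ioo (0:ℝ) 1 ×ˢ Set.Ioo (0:ℝ) 1, w r.1 r.2) = D * D := by
    have : (∫ r in Set.Ioo (0:ℝ) 1 ×ˢ Set.Ioo (0:ℝ) 1, w r.1 r.2)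
        = ∫ r in Set.Ioo (0:ℝ) 1 ×ˢ Set.Ioo (0:ℝ) 1, f5 r.1 * f5 r.2 := by
      apply setIntegral_congr_fun (measurableSet_Ioo.prod measurableSet_Ioo)
      rintro ⟨x, y⟩ ⟨⟨hx0, hx1⟩, ⟨hy0, hy1⟩⟩
      show w x y = f5 x * f5 y
      have hxnn : (0:ℝ) ≤ x * (1-x) := by nlinarith
      have hynn : (0:ℝ) ≤ y * (1-y) := by nlinarith
      show (x * (1-x) * (y * (1-y))) ^ ((5:ℝ)/2) = f5 x * f5 y
      rw [Real.mul_rpow hxnn hynn, (hrpow x hx0 hx1).1, (hrpow y hy0 hy1).1]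
    rw [this, Measure.volume_eq_prod, setIntegral_prod_mul, hD]
  -- numerator
  have hnum : (∫ r in Set.Ioo (0:ℝ) 1 ×ˢ Set.Ioo (0:ℝ) 1, R r.1 r.2 * w r.1 r.2)
      = 36 * (D * D) - 6 * (A * D) := by
    have step1 : (∫ r in Set.Ioo (0:ℝ) 1 ×ˢ Set.Ioo (0:ℝ) 1, R r.1 r.2 * w r.1 r.2)
        = ∫ r in Set.Ioo (0:ℝ) 1 ×ˢ Set.Ioo (0:ℝ) 1,
            (3 * (u r.1 * vv r.2) + 3 * (g r.1 * u r.2)) := by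
      apply setIntegral_congr_fun (measurableSet_Ioo.prod measurableSet_Ioo)
      rintro ⟨x, y⟩ ⟨⟨hx0, hx1⟩, ⟨hy0, hy1⟩⟩
      show R x y * w x y = 3 * (u x * vv y) + 3 * (g x * u y)
      have hx2 : (0:ℝ) < 1 - x := by linarith
      have hy2 : (0:ℝ) < 1 - y := by linarith
      have hxnn : (0:ℝ) ≤ x * (1-x) := by nlinarith
      have hynn : (0:ℝ) ≤ y * (1-y) := by nlinarith
      have hwxy : w x y = f5 x * f5 y := by
        show (x * (1-x) * (y * (1-y))) ^ ((5:ℝ)/2) = f5 x * f5 y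
        rw [Real.mul_rpow hxnn hynn, (hrpow x hx0 hx1).1, (hrpow y hy0 hy1).1]
      have hfx : f5 x = g x * (x * (1-x)) := (hrpow x hx0 hx1).2
      have hfy : f5 y = g y * (y * (1-y)) := (hrpow y hy0 hy1).2
      rw [hwxy]
      show 3 * (12 * x ^ 2 * y ^ 2 - 12 * x ^ 2 * y + x ^ 2 - 12 * x * y ^ 2 +
        12 * x * y - x + y ^ 2 - y) / (x * y * (1 - x) * (1 - y)) * (f5 x * f5 y)
        = 3 * (u x * vv y) + 3 * (g x * u y)
      rw [hu, hvv]
      simp only [hfx, hfy]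
      field_simp
      ring
    rw [step1, Measure.volume_eq_prod, ← Measure.prod_restrict]
    have h1i : Integrable (fun r : ℝ × ℝ => 3 * (u r.1 * vv r.2))
        ((volume.restrict (Set.Ioo (0:ℝ) 1)).prod (volume.restrict (Set.Ioo (0:ℝ) 1))) :=
      (hu_int.mul_prod hvv_int).const_mul 3
    have h2i : Integrable (fun r : ℝ × ℝ => 3 * (g r.1 * u r.2))
        ((volume.restrict (Set.Ioo (0:ℝ) 1)).prod (volume.restrict (Set.Ioo (0:ℝ) 1))) :=
      (hg_int.mul_prod hu_int).const_mul 3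
    rw [integral_add h1i h2i, integral_const_mul, integral_const_mul,
      integral_prod_mul, integral_prod_mul, hIu, hIvv, hA]
    ring
  constructor
  · rw [hnum, hden, hDA]
    have hApos : 0 < A := by nlinarith
    field_simp
    ring
  · rintro ⟨k, hk⟩
    have h5 : ((5 * k : ℤ) : ℝ) = ((72 : ℤ) : ℝ) := by push_cast; linarith
    have := Int.cast_injective (α := ℝ) h5
    omega
end

section
/- Define φ : ℝ³ → (0,∞) × ℝ × (0,∞) by φ(x, z, a) = (e^{x+z}, a, e^{x−z}), and for (v₁, a, v₂) ∈ (0,∞) × ℝ × (0,∞) let G(v₁, a, v₂) = diag(1/(2v₁²), v₁/v₂, 1/(2v₂²)) be the Fisher metric matrix of the two-node Gaussian chain in coordinates (v₁, a, v₂). Then for every (x, z, a) ∈ ℝ³, the pullback matrix J(x,z,a)ᵀ · G(φ(x,z,a)) · J(x,z,a), where J is the Jacobian matrix of φ at (x,z,a) (with column order (x, z, a)), equals diag(1, 1, e^{2z}). Hence the two-node Gaussian chain with its Fisher metric is isometric to the Riemannian product ℝ × H², where H² is the upper half-plane model {(z,a)} with metric dz² + e^{2z} da². -/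
open Real Matrix

noncomputable def Pj (j : Fin 3) : (Fin 3 → ℝ) →L[ℝ] ℝ :=
  ContinuousLinearMap.proj j

/-- Under the coordinate change `φ(x,z,a) = (e^{x+z}, a, e^{x-z})`, the Fisher metric
`diag(1/(2v₁²), v₁/v₂, 1/(2v₂²))` of the two-node Gaussian chain pulls back to
`diag(1, 1, e^{2z})`: the chain is isometric to the Riemannian product `ℝ × H²`. -/
theorem gaussian_chain_product_decomposition :
    let φ : (Fin 3 → ℝ) → (Fin 3 → ℝ) := fun p =>
      ![Real.exp (p 0 + p 1), p 2, Real.exp (p 0 - p 1)]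
    let G : (Fin 3 → ℝ) → Matrix (Fin 3) (Fin 3) ℝ := fun q =>
      Matrix.diagonal ![1 / (2 * (q 0) ^ 2), q 0 / q 2, 1 / (2 * (q 2) ^ 2)]
    let J : (Fin 3 → ℝ) → Matrix (Fin 3) (Fin 3) ℝ := fun p =>
      Matrix.of fun i j => fderiv ℝ φ p (Pi.single j 1) i
    ∀ p : Fin 3 → ℝ,
      (J p)ᵀ * G (φ p) * J p = Matrix.diagonal ![1, 1, Real.exp (2 * p 1)] := by
  intro φ G J p
  have hφ : HasFDerivAt φ (ContinuousLinearMap.pi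
      ![Real.exp (p 0 + p 1) • (Pj 0 + Pj 1), Pj 2,
        Real.exp (p 0 - p 1) • (Pj 0 - Pj 1)]) p := by
    apply hasFDerivAt_pi.2
    intro i
    fin_cases i
    · exact (((Pj 0).hasFDerivAt (x := p)).add ((Pj 1).hasFDerivAt)).exp
    · exact (Pj 2).hasFDerivAt
    · exact (((Pj 0).hasFDerivAt (x := p)).sub ((Pj 1).hasFDerivAt)).exp
  have hJ : J p = Matrix.of
      ![![Real.exp (p 0 + p 1), Real.exp (p 0 + p 1), 0],
        ![0, 0, 1],
        ![Real.exp (p 0 - p 1), -Real.exp (p 0 - p 1), 0]] := by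
    ext i j
    simp only [J, Matrix.of_apply, hφ.fderiv, ContinuousLinearMap.pi_apply]
    fin_cases i <;> fin_cases j <;>
      simp [Pj, Pi.single_apply] <;> ring
  rw [hJ]
  have h1 := Real.exp_pos (p 0 + p 1)
  have h2 := Real.exp_pos (p 0 - p 1)
  have key : Real.exp (p 0 * 2 + p 1 * 2) = Real.exp (p 0 + p 1) ^ 2 := by
    rw [sq, ← Real.exp_add]; ring_nf
  ext i j
  fin_cases i <;> fin_cases j <;>
    simp [G, φ, Matrix.mul_apply, Fin.sum_univ_succ, Matrix.diagonal] <;>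
    field_simp <;>
    norm_num [← Real.exp_add] <;> ring_nf <;> simp only [key] <;> ring
end
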